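/- arXiv:1407.8318 — 3 statements merged into one kernel-verified Lean document; each statement's English description precedes it below -/
import Mathlib

section
/- If e is an idempotent in a finite-dimensional Jordan algebra J over an algebraically closed field of characteristic 0, then the left multiplication operator L(e) is diagonalizable with eigenvalues contained in {0, 1/2, 1}. -/
/-- If `e` is an idempotent in a finite-dimensional Jordan algebra
over an algebraically closed field of characteristic 0, then `L(e)` is
diagonalizable with eigenvalues contained in `{0, 1/2, 1}`. -/
theorem lmul_idempotent_diagonalizable
    {K J : Type*} [Field K] [CharZero K] [IsAlgClosed K]
    [AddCommGroup J] [Module K J] [FiniteDimensional K J]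
    (mul : J →ₗ[K] J →ₗ[K] J)
    (comm : ∀ x y : J, mul x y = mul y x)
    (jordan : ∀ x y : J, mul x (mul (mul x x) y) = mul (mul x x) (mul x y))
    (e : J) (he : mul e e = e) :
    ∃ (n : ℕ) (b : Module.Basis (Fin n) K J) (μ : Fin n → K),
      (∀ i, mul e (b i) = μ i • b i) ∧
      (∀ i, μ i = 0 ∨ μ i = 1/2 ∨ μ i = 1) := by
  classical
  -- cubic identity 2L³ - 3L² + L = 0
  have key : ∀ z : J, mul e z + (2:K) • mul e (mul e (mul e z)) = (3:K) • mul e (mul e z) := by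
    intro z
    have hp := jordan (e + z) e
    have hm := jordan (e - z) e
    have hz := jordan z e
    simp only [map_add, map_sub, LinearMap.add_apply, LinearMap.sub_apply, he,
      comm z e, comm (mul z z) e, comm (mul e z) e] at hp hm hz
    linear_combination (norm := module) (1/2 : K) • hp - (1/2:K) • hm - hz
  -- set of eigenvectors
  set S : Set J := {v : J | ∃ c : K, (c = 0 ∨ c = 1/2 ∨ c = 1) ∧ mul e v = c • v} with hS
  have hspan : Submodule.span K S = ⊤ := by
    rw [Submodule.eq_top_iff']
    intro y
    have h0 : ((2:K) • mul e (mul e y) - (3:K) • mul e y + y) ∈ S := by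
      refine ⟨0, Or.inl rfl, ?_⟩
      have := key y
      simp only [map_sub, map_add, map_smul, zero_smul]
      linear_combination (norm := module) this
    have hh : ((4:K) • mul e y - (4:K) • mul e (mul e y)) ∈ S := by
      refine ⟨1/2, Or.inr (Or.inl rfl), ?_⟩
      have := key y
      simp only [map_sub, map_smul]
      linear_combination (norm := module) (-2:K) • this
    have h1 : ((2:K) • mul e (mul e y) - mul e y) ∈ S := by
      refine ⟨1, Or.inr (Or.inr rfl), ?_⟩
      have := key y
      simp only [map_sub, map_smul, one_smul]
      linear_combination (norm := module) this
    have hy : y = ((2:K) • mul e (mul e y) - (3:K) • mul e y + y)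
        + ((4:K) • mul e y - (4:K) • mul e (mul e y))
        + ((2:K) • mul e (mul e y) - mul e y) := by module
    rw [hy]
    exact add_mem (add_mem (Submodule.subset_span h0) (Submodule.subset_span hh))
      (Submodule.subset_span h1)
  obtain ⟨t, hts, hspan', hli⟩ := exists_linearIndependent K S
  have hfin : t.Finite := hli.setFinite
  have htop : Submodule.span K (Set.range ((↑) : t → J)) = ⊤ := by
    rw [Subtype.range_coe]; rw [hspan', hspan]
  have := hfin.fintype
  let b0 : Module.Basis t K J := Module.Basis.mk hli (le_of_eq htop.symm)
  let n := Fintype.card t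
  let eqv : t ≃ Fin n := Fintype.equivFin t
  let b : Module.Basis (Fin n) K J := b0.reindex eqv
  have hbS : ∀ i : Fin n, (b i : J) ∈ S := by
    intro i
    have : b i = ((eqv.symm i : t) : J) := by
      simp [b, b0, Module.Basis.reindex_apply, Module.Basis.mk_apply]
    rw [this]
    exact hts (eqv.symm i).2
  choose μ hμmem hμ using fun i => hbS i
  exact ⟨n, b, μ, hμ, hμmem⟩
end

section
/- Let J be a finite-dimensional Jordan algebra and A a subalgebra with ideal R. Then the subspace [A,R] ⊕ L(R) := span{[L(a),L(r)], L(r) : a ∈ A, r ∈ R} of End(J) is closed under taking Lie brackets with elements of the form [L(a),L(b)] + L(c), a,b,c ∈ A; in particular, [A,R] ⊕ L(R) is a Lie ideal of the Lie algebra [A,A] ⊕ L(A) = span{[L(a),L(b)] + L(c) : a,b,c ∈ A} ⊆ gl(J). -/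
/-- Let `A` be a subalgebra of a finite-dimensional Jordan algebra
`J` and `R` an ideal of `A`. Then the subspace
`[A,R] ⊕ L(R) = span{[L(a),L(r)], L(r) : a ∈ A, r ∈ R}` of `End(J)` is a Lie
ideal of `[A,A] ⊕ L(A) = span{[L(a),L(b)] + L(c) : a,b,c ∈ A}`: bracketing any
element of the latter with any element of the former lands in the former. -/
theorem radical_part_is_lie_ideal
    {K J : Type*} [Field K] [CharZero K] [AddCommGroup J] [Module K J]
    [FiniteDimensional K J]
    (mul : J →ₗ[K] J →ₗ[K] J)
    (comm : ∀ x y : J, mul x y = mul y x)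
    (jordan : ∀ x y : J, mul x (mul (mul x x) y) = mul (mul x x) (mul x y))
    (A R : Submodule K J)
    (hA : ∀ x ∈ A, ∀ y ∈ A, mul x y ∈ A)
    (hRA : R ≤ A)
    (hR : ∀ a ∈ A, ∀ r ∈ R, mul a r ∈ R) :
    ∀ f ∈ Submodule.span K
        {f : Module.End K J | ∃ a ∈ A, ∃ b ∈ A, ∃ c ∈ A,
          f = ⁅(mul a : Module.End K J), (mul b : Module.End K J)⁆ + mul c},
      ∀ g ∈ Submodule.span K
        ({g : Module.End K J | ∃ a ∈ A, ∃ r ∈ R,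
            g = ⁅(mul a : Module.End K J), (mul r : Module.End K J)⁆} ∪
          {g : Module.End K J | ∃ r ∈ R, g = mul r}),
      ⁅f, g⁆ ∈ Submodule.span K
        ({g : Module.End K J | ∃ a ∈ A, ∃ r ∈ R,
            g = ⁅(mul a : Module.End K J), (mul r : Module.End K J)⁆} ∪
          {g : Module.End K J | ∃ r ∈ R, g = mul r}) := by
  -- Step 1: fully linearized Jordan identity.
  have key : ∀ a b c y : J,
      mul a (mul (mul b c) y) - mul (mul b c) (mul a y)
      + mul b (mul (mul a c) y) - mul (mul a c) (mul b y)
      + mul c (mul (mul a b) y) - mul (mul a b) (mul c y) = 0 := by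
    intro a b c y
    have e1 := jordan (a+b+c) y
    have e2 := jordan (a+b) y
    have e3 := jordan (a+c) y
    have e4 := jordan (b+c) y
    have e5 := jordan a y
    have e6 := jordan b y
    have e7 := jordan c y
    simp only [map_add, LinearMap.add_apply] at e1 e2 e3 e4
    simp only [comm b a, comm c a, comm c b] at e1 e2 e3 e4
    have h2 : (2:K) • (mul a (mul (mul b c) y) - mul (mul b c) (mul a y)
        + mul b (mul (mul a c) y) - mul (mul a c) (mul b y)
        + mul c (mul (mul a b) y) - mul (mul a b) (mul c y)) = 0 := by
      linear_combination (norm := module) e1 - e2 - e3 - e4 + e5 + e6 + e7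
    rcases smul_eq_zero.mp h2 with h | h
    · exact absurd h two_ne_zero
    · exact h
  -- Step 2: `[L a, L b]` is a derivation; pointwise version of
  -- `[[L a, L b], L c] = L (a(bc) - b(ac))`.
  have der : ∀ a b c y : J,
      mul a (mul b (mul c y)) - mul b (mul a (mul c y))
      - mul c (mul a (mul b y)) + mul c (mul b (mul a y))
      = mul (mul a (mul b c) - mul b (mul a c)) y := by
    intro a b c y
    have k1 := key b c y a
    have k2 := key a c y b
    simp only [comm y a, comm y b, comm b a, comm c a, comm c b,
      comm (mul c y) a, comm (mul c y) b, comm (mul b y) a, comm (mul a y) b,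
      comm (mul b c) a, comm (mul a c) b,
      comm (mul b y) (mul a c), comm (mul a y) (mul b c),
      comm y (mul a (mul b c)), comm y (mul b (mul a c))] at k1 k2
    rw [map_sub, LinearMap.sub_apply]
    linear_combination (norm := module) k2 - k1
  -- Operator form of the derivation identity.
  have opder : ∀ a b c : J,
      ⁅⁅(mul a : Module.End K J), (mul b : Module.End K J)⁆,
          (mul c : Module.End K J)⁆
        = mul (mul a (mul b c) - mul b (mul a c)) := by
    intro a b c
    ext y
    have d := der a b c y
    rw [map_sub, LinearMap.sub_apply] at d
    simp only [Ring.lie_def, LinearMap.sub_apply, Module.End.mul_apply, map_sub]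
    linear_combination (norm := module) d
  letI : LieRing (Module.End K J) := LieRing.ofAssociativeRing
  letI : LieAlgebra K (Module.End K J) := LieAlgebra.ofAssociativeAlgebra
  intro f hf g hg
  set S : Set (Module.End K J) :=
    ({g : Module.End K J | ∃ a ∈ A, ∃ r ∈ R,
        g = ⁅(mul a : Module.End K J), (mul r : Module.End K J)⁆} ∪
      {g : Module.End K J | ∃ r ∈ R, g = mul r}) with hSdef
  have memL : ∀ r ∈ R, (mul r : Module.End K J) ∈ Submodule.span K S :=
    fun r hr => Submodule.subset_span (Or.inr ⟨r, hr, rfl⟩)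
  have memB : ∀ a ∈ A, ∀ r ∈ R,
      ⁅(mul a : Module.End K J), (mul r : Module.End K J)⁆ ∈ Submodule.span K S :=
    fun a ha r hr => Submodule.subset_span (Or.inl ⟨a, ha, r, hr, rfl⟩)
  -- the key generator computation
  have main : ∀ a ∈ A, ∀ b ∈ A, ∀ c ∈ A, ∀ g ∈ S,
      ⁅⁅(mul a : Module.End K J), (mul b : Module.End K J)⁆ + mul c, g⁆
        ∈ Submodule.span K S := by
    rintro a ha b hb c hc g (⟨a', ha', r, hr, rfl⟩ | ⟨r, hr, rfl⟩)
    · rw [add_lie]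
      refine Submodule.add_mem _ ?_ ?_
      · rw [leibniz_lie, opder a b a']
        refine Submodule.add_mem _ ?_ ?_
        · exact memB _ (A.sub_mem (hA a ha _ (hA b hb a' ha'))
            (hA b hb _ (hA a ha a' ha'))) r hr
        · rw [opder a b r]
          exact memB a' ha' _ (R.sub_mem (hR a ha _ (hR b hb r hr))
            (hR b hb _ (hR a ha r hr)))
      · rw [← lie_skew, opder a' r c]
        refine Submodule.neg_mem _ (memL _ (R.sub_mem ?_ ?_))
        · exact hR a' ha' _ (by rw [comm r c]; exact hR c hc r hr)
        · rw [comm r (mul a' c)]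
          exact hR _ (hA a' ha' c hc) r hr
    · rw [add_lie]
      refine Submodule.add_mem _ ?_ (memB c hc r hr)
      rw [opder a b r]
      exact memL _ (R.sub_mem (hR a ha _ (hR b hb r hr))
        (hR b hb _ (hR a ha r hr)))
  refine Submodule.span_induction
    (p := fun f _ => ∀ g ∈ Submodule.span K S, ⁅f, g⁆ ∈ Submodule.span K S)
    ?_ ?_ ?_ ?_ hf g hg
  · rintro x ⟨a, ha, b, hb, c, hc, rfl⟩ g hg
    refine Submodule.span_induction
      (p := fun g _ =>
        ⁅⁅(mul a : Module.End K J), (mul b : Module.End K J)⁆ + mul c, g⁆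
          ∈ Submodule.span K S)
      (fun y hy => main a ha b hb c hc y hy) ?_ ?_ ?_ hg
    · beta_reduce; rw [lie_zero]; exact Submodule.zero_mem _
    · intro u v _ _ pu pv; beta_reduce; rw [lie_add]; exact Submodule.add_mem _ pu pv
    · intro t u _ pu; beta_reduce; rw [lie_smul]; exact Submodule.smul_mem _ _ pu
  · intro g hg; beta_reduce; rw [zero_lie]; exact Submodule.zero_mem _
  · intro u v _ _ pu pv g hg; beta_reduce; rw [add_lie]
    exact Submodule.add_mem _ (pu g hg) (pv g hg)
  · intro t u _ pu g hg; beta_reduce; rw [smul_lie]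
    exact Submodule.smul_mem _ _ (pu g hg)
end

section
/- Let J be a finite-dimensional semi-simple Jordan algebra over an algebraically closed field of characteristic 0 and λ: K* → Aut(J) a one-parameter subgroup. If 0 = lim_{t→0} λ(t)·x for some x ∈ Jⁿ (componentwise), then the subalgebra A(x) generated by the components of x is contained in J_{>0}(λ) and hence is solvable. -/
variable {K J : Type*} [Field K] [AddCommGroup J] [Module K J]

/-- The weight space `J_k(λ) = {z ∈ J | λ(t)·z = t^k • z for all t ∈ K*}`. -/
def weightSpace (lam : Kˣ →* (J ≃ₗ[K] J)) (k : ℤ) : Submodule K J where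
  carrier := {z | ∀ t : Kˣ, lam t z = ((t ^ k : Kˣ) : K) • z}
  add_mem' := by
    intro a b ha hb t
    simp [map_add, ha t, hb t, smul_add]
  zero_mem' := by intro t; simp
  smul_mem' := by
    intro c a ha t
    rw [map_smul, ha t, smul_comm]

/-- The Jordan subalgebra generated by a set `s ⊆ J`. -/
def genSubalgebra (mul : J →ₗ[K] J →ₗ[K] J) (s : Set J) : Submodule K J :=
  sInf {A : Submodule K J | (∀ x ∈ A, ∀ y ∈ A, mul x y ∈ A) ∧ s ⊆ A}

/-- The derived series of a subspace `A` of a Jordan algebra. -/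
def derSeries (mul : J →ₗ[K] J →ₗ[K] J) (A : Submodule K J) : ℕ → Submodule K J
  | 0 => A
  | n + 1 => Submodule.span K
      {z : J | ∃ a ∈ derSeries mul A n, ∃ b ∈ derSeries mul A n, z = mul a b}

/-- A subspace is solvable if its derived series reaches zero. -/
def IsSolvableSubalgebra (mul : J →ₗ[K] J →ₗ[K] J) (A : Submodule K J) : Prop :=
  ∃ n : ℕ, derSeries mul A n = ⊥

/-- The sum of weight spaces of weight at least `m`. -/
def QQ (lam : Kˣ →* (J ≃ₗ[K] J)) (m : ℤ) : Submodule K J :=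
  ⨆ k : ℤ, ⨆ _ : m ≤ k, weightSpace lam k

lemma weightSpace_mul_mem (mul : J →ₗ[K] J →ₗ[K] J) (lam : Kˣ →* (J ≃ₗ[K] J))
    (hlam : ∀ (t : Kˣ) (x y : J), lam t (mul x y) = mul (lam t x) (lam t y))
    {k l : ℤ} {a b : J} (ha : a ∈ weightSpace lam k) (hb : b ∈ weightSpace lam l) :
    mul a b ∈ weightSpace lam (k + l) := by
  intro t
  rw [hlam t a b, ha t, hb t, map_smul, LinearMap.map_smul₂, smul_smul, ← Units.val_mul,
    ← zpow_add, add_comm l k]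

lemma mem_QQ_of_mem (lam : Kˣ →* (J ≃ₗ[K] J)) {m k : ℤ} (h : m ≤ k) {z : J}
    (hz : z ∈ weightSpace lam k) : z ∈ QQ lam m :=
  Submodule.mem_iSup_of_mem k (Submodule.mem_iSup_of_mem h hz)

lemma QQ_antitone (lam : Kˣ →* (J ≃ₗ[K] J)) {m m' : ℤ} (h : m ≤ m') :
    QQ lam m' ≤ QQ lam m :=
  iSup_le fun k => iSup_le fun hk =>
    le_iSup_of_le k (le_iSup_of_le (h.trans hk) le_rfl)

lemma QQ_mul_mem (mul : J →ₗ[K] J →ₗ[K] J) (lam : Kˣ →* (J ≃ₗ[K] J))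
    (hlam : ∀ (t : Kˣ) (x y : J), lam t (mul x y) = mul (lam t x) (lam t y))
    {m m' : ℤ} {a b : J} (ha : a ∈ QQ lam m) (hb : b ∈ QQ lam m') :
    mul a b ∈ QQ lam (m + m') := by
  rw [QQ, iSup_subtype'] at ha hb
  refine Submodule.iSup_induction' _ (motive := fun a _ => mul a b ∈ QQ lam (m + m'))
    (fun i a hai => ?_) (by simp)
    (fun y z _ _ hy hz => by simp only [map_add, LinearMap.add_apply]; exact add_mem hy hz) ha
  refine Submodule.iSup_induction' _ (motive := fun b _ => mul a b ∈ QQ lam (m + m'))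
    (fun j b hbj => ?_) (by simp)
    (fun y z _ _ hy hz => by simp only [map_add]; exact add_mem hy hz) hb
  exact mem_QQ_of_mem lam (add_le_add i.2 j.2)
    (weightSpace_mul_mem mul lam hlam hai hbj)

/-- Let `J` be a finite-dimensional semi-simple Jordan algebra over
an algebraically closed field of characteristic 0 and `λ : K* → Aut(J)` a
one-parameter subgroup (with weight space decomposition).  If
`lim_{t→0} λ(t)·x = 0` for `x ∈ Jⁿ`, i.e. every component of `x` lies in
`J_{>0}(λ)`, then the subalgebra `A(x)` generated by the components of `x` is
contained in `J_{>0}(λ)` and hence solvable. -/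
theorem limit_zero_implies_solvable
    [CharZero K] [IsAlgClosed K] [FiniteDimensional K J]
    (mul : J →ₗ[K] J →ₗ[K] J)
    (comm : ∀ x y : J, mul x y = mul y x)
    (jordan : ∀ x y : J, mul x (mul (mul x x) y) = mul (mul x x) (mul x y))
    (hnd : ∀ x : J, (∀ y : J, LinearMap.trace K J (mul (mul x y)) = 0) → x = 0)
    (lam : Kˣ →* (J ≃ₗ[K] J))
    (hlam : ∀ (t : Kˣ) (x y : J), lam t (mul x y) = mul (lam t x) (lam t y))
    (hdecomp : DirectSum.IsInternal (weightSpace (J := J) lam))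
    (n : ℕ) (x : Fin n → J)
    (hx : ∀ j : Fin n, x j ∈ ⨆ k : ℤ, ⨆ _ : 0 < k, weightSpace (J := J) lam k) :
    genSubalgebra mul (Set.range x) ≤
        (⨆ k : ℤ, ⨆ _ : 0 < k, weightSpace (J := J) lam k) ∧
      IsSolvableSubalgebra mul (genSubalgebra mul (Set.range x)) := by
  have hPQ : (⨆ k : ℤ, ⨆ _ : 0 < k, weightSpace (J := J) lam k) = QQ lam 1 := by
    unfold QQ
    simp only [Int.lt_iff_add_one_le, zero_add]
  -- the positive part is closed under multiplication
  have hclosed : ∀ a ∈ QQ lam 1, ∀ b ∈ QQ lam 1, mul a b ∈ QQ lam 1 := by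
    intro a ha b hb
    exact QQ_antitone lam (by norm_num) (QQ_mul_mem mul lam hlam ha hb)
  have hle : genSubalgebra mul (Set.range x) ≤ QQ lam 1 := by
    apply sInf_le
    refine ⟨hclosed, ?_⟩
    rintro _ ⟨j, rfl⟩
    exact hPQ ▸ hx j
  -- only finitely many nonzero weight spaces
  have hfin : {k : ℤ | weightSpace (J := J) lam k ≠ ⊥}.Finite :=
    Submodule.finite_ne_bot_of_iSupIndep hdecomp.submodule_iSupIndep
  obtain ⟨M, hM⟩ := hfin.bddAbove
  -- all weight spaces above M + 1 vanish
  have hQbot : QQ lam (M + 1) = ⊥ := by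
    rw [QQ, eq_bot_iff]
    refine iSup_le fun k => iSup_le fun hk => ?_
    by_contra h
    have hk' : weightSpace (J := J) lam k ≠ ⊥ := fun hb => h (le_of_eq hb)
    exact absurd (hM hk') (by omega)
  -- derived series estimate
  have hder : ∀ N : ℕ, derSeries mul (genSubalgebra mul (Set.range x)) N ≤
      QQ lam (2 ^ N) := by
    intro N
    induction N with
    | zero => simpa [derSeries] using hle
    | succ N ih =>
      rw [derSeries, Submodule.span_le]
      rintro _ ⟨a, ha, b, hb, rfl⟩
      have h2 : ((2 : ℤ) ^ (N + 1)) = 2 ^ N + 2 ^ N := by ring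
      rw [h2]
      exact QQ_mul_mem mul lam hlam (ih ha) (ih hb)
  refine ⟨hPQ ▸ hle, ?_⟩
  -- choose N large enough
  obtain ⟨N, hN⟩ : ∃ N : ℕ, M + 1 ≤ 2 ^ N := by
    refine ⟨(M + 1).toNat, ?_⟩
    calc M + 1 ≤ ((M + 1).toNat : ℤ) := Int.self_le_toNat _
      _ ≤ (2 : ℤ) ^ (M + 1).toNat := by
          exact_mod_cast (Nat.lt_two_pow_self (n := (M + 1).toNat)).le
  exact ⟨N, le_bot_iff.mp ((hder N).trans ((QQ_antitone lam hN).trans hQbot.le))⟩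
end
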